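/- For the water-wave dispersion Ω(k) = √(k tanh k), Ω is real-analytic on (0,∞), strictly increasing, and strictly concave for k > 0: Ω′(k) > 0 and Ω″(k) < 0 for all k > 0. -/

import Mathlib

open Real

/-- Derivative of tanh. -/
lemma my_hasDerivAt_tanh (x : ℝ) :
    HasDerivAt Real.tanh (1 - Real.tanh x ^ 2) x := by
  have h : HasDerivAt (fun y => Real.sinh y / Real.cosh y)
      ((Real.cosh x * Real.cosh x - Real.sinh x * Real.sinh x) / Real.cosh x ^ 2) x :=
    (Real.hasDerivAt_sinh x).div (Real.hasDerivAt_cosh x) (Real.cosh_pos x).ne'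
  have heq : (fun y => Real.sinh y / Real.cosh y) = Real.tanh := by
    funext y; rw [Real.tanh_eq_sinh_div_cosh]
  rw [heq] at h
  convert h using 1
  have hc := Real.cosh_pos x
  have hid := Real.cosh_sq_sub_sinh_sq x
  rw [Real.tanh_eq_sinh_div_cosh]
  field_simp

lemma my_tanh_pos {x : ℝ} (hx : 0 < x) : 0 < Real.tanh x := by
  rw [Real.tanh_eq_sinh_div_cosh]
  exact div_pos (by rwa [Real.sinh_pos_iff]) (Real.cosh_pos x)

lemma my_tanh_lt_one (x : ℝ) : Real.tanh x < 1 := by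
  rw [Real.tanh_eq_sinh_div_cosh, div_lt_one (Real.cosh_pos x)]
  exact Real.sinh_lt_cosh x

/-- Real analyticity of sqrt at positive points. -/
lemma my_analyticAt_sqrt {x : ℝ} (hx : 0 < x) : AnalyticAt ℝ Real.sqrt x := by
  have hlog : AnalyticAt ℂ Complex.log (x : ℂ) :=
    analyticAt_clog (Complex.ofReal_mem_slitPlane.2 hx)
  have hc : AnalyticAt ℂ (fun z : ℂ => Complex.exp (Complex.log z * (1 / 2))) (x : ℂ) := by
    apply analyticAt_cexp.comp
    exact hlog.mul analyticAt_const
  have hr : AnalyticAt ℝ (fun z : ℂ => Complex.exp (Complex.log z * (1 / 2))) (x : ℂ) :=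
    hc.restrictScalars
  have hofReal : AnalyticAt ℝ (fun y : ℝ => (y : ℂ)) x :=
    Complex.ofRealCLM.analyticAt x
  have hcomp : AnalyticAt ℝ
      (fun y : ℝ => Complex.exp (Complex.log (y : ℂ) * (1 / 2))) x := hr.comp hofReal
  have hre : AnalyticAt ℝ
      (fun y : ℝ => (Complex.exp (Complex.log (y : ℂ) * (1 / 2))).re) x :=
    (Complex.reCLM.analyticAt _).comp hcomp
  apply hre.congr
  filter_upwards [eventually_gt_nhds hx] with y hy
  have h1 : Complex.log (y : ℂ) = (Real.log y : ℂ) := (Complex.ofReal_log hy.le).symm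
  rw [h1]
  have h2 : (Real.log y : ℂ) * (1 / 2) = ((Real.log y * (1 / 2) : ℝ) : ℂ) := by push_cast; ring
  rw [h2, ← Complex.ofReal_exp, Complex.ofReal_re]
  rw [Real.sqrt_eq_rpow, Real.rpow_def_of_pos hy]

theorem waterwave_dispersion_properties :
    let Ω : ℝ → ℝ := fun k => Real.sqrt (k * Real.tanh k)
    (∀ k : ℝ, 0 < k → AnalyticAt ℝ Ω k)
    ∧ StrictMonoOn Ω (Set.Ioi 0)
    ∧ (∀ k : ℝ, 0 < k → 0 < deriv Ω k)
    ∧ (∀ k : ℝ, 0 < k → iteratedDeriv 2 Ω k < 0) := by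
  intro Ω
  -- basic facts
  have hFpos : ∀ k : ℝ, 0 < k → 0 < k * Real.tanh k := fun k hk =>
    mul_pos hk (my_tanh_pos hk)
  -- F and its derivatives
  set F : ℝ → ℝ := fun x => x * Real.tanh x with hFdef
  set F' : ℝ → ℝ := fun x => 1 * Real.tanh x + x * (1 - Real.tanh x ^ 2) with hF'def
  have hF : ∀ x : ℝ, HasDerivAt F (F' x) x := fun x =>
    (hasDerivAt_id x).mul (my_hasDerivAt_tanh x)
  have hF'pos : ∀ k : ℝ, 0 < k → 0 < F' k := by
    intro k hk
    have ht := my_tanh_pos hk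
    have ht1 := my_tanh_lt_one k
    have : 0 < 1 - Real.tanh k ^ 2 := by nlinarith
    simp only [hF'def]
    nlinarith
  -- derivative of Ω
  set G : ℝ → ℝ := fun x => F' x / (2 * Real.sqrt (F x)) with hGdef
  have hΩ : ∀ k : ℝ, 0 < k → HasDerivAt Ω (G k) k := by
    intro k hk
    exact (hF k).sqrt (hFpos k hk).ne'
  have hGpos : ∀ k : ℝ, 0 < k → 0 < G k := by
    intro k hk
    exact div_pos (hF'pos k hk)
      (mul_pos two_pos (Real.sqrt_pos.2 (hFpos k hk)))
  have hderiv : ∀ k : ℝ, 0 < k → deriv Ω k = G k := fun k hk => (hΩ k hk).deriv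
  refine ⟨?_, ?_, ?_, ?_⟩
  · -- analyticity
    intro k hk
    have hsinh : AnalyticAt ℝ Real.sinh k := by
      have : AnalyticAt ℝ (fun y : ℝ => (Real.exp y - Real.exp (-y)) / 2) k := by
        apply AnalyticAt.div
        · exact (analyticAt_rexp.comp analyticAt_id).sub
            (analyticAt_rexp.comp analyticAt_id.neg)
        · exact analyticAt_const
        · norm_num
      exact this.congr (by filter_upwards with y; rw [Real.sinh_eq])
    have hcosh : AnalyticAt ℝ Real.cosh k := by
      have : AnalyticAt ℝ (fun y : ℝ => (Real.exp y + Real.exp (-y)) / 2) k := by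
        apply AnalyticAt.div
        · exact (analyticAt_rexp.comp analyticAt_id).add
            (analyticAt_rexp.comp analyticAt_id.neg)
        · exact analyticAt_const
        · norm_num
      exact this.congr (by filter_upwards with y; rw [Real.cosh_eq])
    have htanh : AnalyticAt ℝ Real.tanh k := by
      have : AnalyticAt ℝ (fun y : ℝ => Real.sinh y / Real.cosh y) k :=
        hsinh.div hcosh (Real.cosh_pos k).ne'
      exact this.congr (by filter_upwards with y; rw [Real.tanh_eq_sinh_div_cosh])
    have hFa : AnalyticAt ℝ F k := analyticAt_id.mul htanh
    have h : AnalyticAt ℝ (Real.sqrt ∘ F) k :=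
      AnalyticAt.comp (my_analyticAt_sqrt (hFpos k hk)) hFa
    exact h
  · -- strict mono
    apply strictMonoOn_of_deriv_pos (convex_Ioi 0)
    · apply Continuous.continuousOn
      have hct : Continuous Real.tanh := by
        have h : Continuous fun y => Real.sinh y / Real.cosh y :=
          Real.continuous_sinh.div Real.continuous_cosh fun x => (Real.cosh_pos x).ne'
        have he : (fun y => Real.sinh y / Real.cosh y) = Real.tanh := by
          funext y; rw [Real.tanh_eq_sinh_div_cosh]
        rwa [he] at h
      exact (continuous_id.mul hct).sqrt
    · intro x hx
      rw [interior_Ioi] at hx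
      rw [hderiv x hx]
      exact hGpos x hx
  · intro k hk
    rw [hderiv k hk]
    exact hGpos k hk
  · -- second derivative
    intro k hk
    rw [iteratedDeriv_succ, iteratedDeriv_one]
    have hev : deriv Ω =ᶠ[nhds k] G := by
      filter_upwards [eventually_gt_nhds hk] with x hx
      exact hderiv x hx
    rw [hev.deriv_eq]
    -- compute deriv G k
    set t := Real.tanh k with htdef
    have ht : 0 < t := my_tanh_pos hk
    have ht1 : t < 1 := my_tanh_lt_one k
    set s := Real.sqrt (F k) with hsdef
    have hs : 0 < s := Real.sqrt_pos.2 (hFpos k hk)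
    have hs2 : s ^ 2 = k * t := Real.sq_sqrt (hFpos k hk).le
    -- derivative of F'
    have hF'' : HasDerivAt F'
        (1 * (1 - t ^ 2) + (1 * (1 - t ^ 2) + k * -(2 * t ^ 1 * (1 - t ^ 2)))) k := by
      have h1 : HasDerivAt (fun x : ℝ => 1 * Real.tanh x) (1 * (1 - t ^ 2)) k :=
        (my_hasDerivAt_tanh k).const_mul 1
      have h2 : HasDerivAt (fun x : ℝ => x * (1 - Real.tanh x ^ 2))
          (1 * (1 - t ^ 2) + k * -(2 * t ^ 1 * (1 - t ^ 2))) k := by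
        apply (hasDerivAt_id k).mul
        have := ((my_hasDerivAt_tanh k).pow 2).neg.const_add 1
        simpa [sub_eq_add_neg] using this
      exact h1.add h2
    -- derivative of denominator
    have hD : HasDerivAt (fun x => 2 * Real.sqrt (F x)) (2 * (F' k / (2 * s))) k :=
      ((hF k).sqrt (hFpos k hk).ne').const_mul 2
    have hG' : HasDerivAt G
        (((1 * (1 - t ^ 2) + (1 * (1 - t ^ 2) + k * -(2 * t ^ 1 * (1 - t ^ 2)))) * (2 * s)
          - F' k * (2 * (F' k / (2 * s)))) / (2 * s) ^ 2) k := by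
      exact hF''.div hD (by positivity)
    rw [hG'.deriv]
    -- now prove negativity
    have hF'k : F' k = t + k * (1 - t ^ 2) := by simp [hF'def, htdef]
    apply div_neg_of_neg_of_pos
    · rw [hF'k]
      have key : (t + k * (1 - t ^ 2)) ^ 2 - 2 * (k * t) * (2 * (1 - t ^ 2) * (1 - k * t)) > 0 := by
        nlinarith [sq_nonneg (t - k * (1 - t ^ 2)), mul_pos (mul_pos (mul_pos hk hk) (mul_pos ht ht)) (show (0:ℝ) < 1 - t^2 by nlinarith)]
      have h1 : (t + k * (1 - t ^ 2)) * (2 * ((t + k * (1 - t ^ 2)) / (2 * s)))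
          = (t + k * (1 - t ^ 2)) ^ 2 / s := by
        field_simp
      rw [h1, sub_neg, lt_div_iff₀ hs]
      have hA : (1 * (1 - t ^ 2) + (1 * (1 - t ^ 2) + k * -(2 * t ^ 1 * (1 - t ^ 2)))) * (2 * s) * s
          = 2 * (k * t) * (2 * (1 - t ^ 2) * (1 - k * t)) := by
        linear_combination
          (2 * (1 * (1 - t ^ 2) + (1 * (1 - t ^ 2) + k * -(2 * t ^ 1 * (1 - t ^ 2))))) * hs2
      rw [hA]
      linarith [key]
    · positivity
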